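/- arXiv:2503.20569 — 2 statements merged into one kernel-verified Lean document; each statement's English description precedes it below -/
import Mathlib

section
/- Let f₀, f₁ : ℝⁿ → ℝⁿ be Lipschitz with constants k₀, k₁, let u, v : [t₀,T] → ℝ be measurable controls bounded by M, and let x_u, x_v be the corresponding solutions of ẋ = f₀(x) + f₁(x)u(t) with the same initial condition x₀. If |f₁(y)| ≤ c₁(1 + |y|) and both trajectories are bounded by C_x, then for all t ∈ [t₀,T], |x_u(t) − x_v(t)| ≤ c₁(1 + C_x)(t − t₀)^{1/2} · exp((k₀ + M k₁)(t − t₀)) · ‖u − v‖_{L²(t₀,T)}. -/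
open MeasureTheory

open Set in
lemma gronwall_int {φ : ℝ → ℝ} {a b L A : ℝ} (hab : a ≤ b) (hL : 0 ≤ L) (hA : 0 ≤ A)
    (hφc : ContinuousOn φ (Set.Icc a b)) (hφ0 : ∀ s ∈ Set.Icc a b, 0 ≤ φ s)
    (hkey : ∀ s ∈ Set.Icc a b, φ s ≤ A + L * ∫ σ in a..s, φ σ) :
    φ b ≤ A * Real.exp (L * (b - a)) := by
  have hint : IntegrableOn φ (Set.Icc a b) := hφc.integrableOn_Icc
  set F : ℝ → ℝ := fun s => ∫ σ in a..s, φ σ with hF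
  have hii : ∀ s ∈ Set.Icc a b, IntervalIntegrable φ volume a s := by
    intro s hs
    exact (intervalIntegrable_iff_integrableOn_Icc_of_le hs.1).mpr
      (hint.mono_set (Set.Icc_subset_Icc le_rfl hs.2))
  have hFc : ContinuousOn F (Set.Icc a b) := by
    have := intervalIntegral.continuousOn_primitive_interval
      (a := a) (b := b) (f := φ) (μ := volume) (by rwa [Set.uIcc_of_le hab])
    rwa [Set.uIcc_of_le hab] at this
  have hF' : ∀ s ∈ Set.Ico a b, HasDerivWithinAt F (φ s) (Set.Ici s) s := by
    intro s hs
    have hmem : Set.Icc a b ∈ nhdsWithin s (Set.Ici s) :=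
      Filter.mem_of_superset (Icc_mem_nhdsGE_of_mem ⟨le_rfl, hs.2⟩)
        (Set.Icc_subset_Icc hs.1 le_rfl)
    have hmem' : Set.Icc a b ∈ nhdsWithin s (Set.Ioi s) :=
      nhdsWithin_mono s Set.Ioi_subset_Ici_self hmem
    refine intervalIntegral.integral_hasDerivWithinAt_right (s := Set.Ici s) (t := Set.Ioi s)
      (hii s ⟨hs.1, hs.2.le⟩)
      ⟨Set.Icc a b, hmem', hφc.aestronglyMeasurable measurableSet_Icc⟩ ?_
    exact (hφc s ⟨hs.1, hs.2.le⟩).mono_of_mem_nhdsWithin hmem'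
  have hF0 : ∀ s ∈ Set.Icc a b, 0 ≤ F s := by
    intro s hs
    exact intervalIntegral.integral_nonneg hs.1 (fun σ hσ => hφ0 σ ⟨hσ.1, hσ.2.trans hs.2⟩)
  have bound : ∀ s ∈ Set.Ico a b, ‖φ s‖ ≤ L * ‖F s‖ + A := by
    intro s hs
    have hs' : s ∈ Set.Icc a b := ⟨hs.1, hs.2.le⟩
    rw [Real.norm_of_nonneg (hφ0 s hs'), Real.norm_of_nonneg (hF0 s hs')]
    linarith [hkey s hs']
  have hFa : ‖F a‖ ≤ 0 := by simp [hF]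
  have key := norm_le_gronwallBound_of_norm_deriv_right_le hFc hF' hFa bound b ⟨hab, le_rfl⟩
  rw [Real.norm_of_nonneg (hF0 b ⟨hab, le_rfl⟩)] at key
  have h2 : φ b ≤ A + L * F b := hkey b ⟨hab, le_rfl⟩
  rcases eq_or_lt_of_le hL with hL0 | hLpos
  · subst hL0
    simpa using h2
  · have : F b ≤ A / L * (Real.exp (L * (b - a)) - 1) := by
      have := key
      rw [gronwallBound_of_K_ne_0 hLpos.ne'] at this
      simpa using this
    have h3 : L * F b ≤ L * (A / L * (Real.exp (L * (b - a)) - 1)) :=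
      mul_le_mul_of_nonneg_left this hL
    have h4 : L * (A / L * (Real.exp (L * (b - a)) - 1))
        = A * Real.exp (L * (b - a)) - A := by
      field_simp
    linarith

open Set in
lemma cs_int {w : ℝ → ℝ} {t₀ s t T : ℝ} (h1 : t₀ ≤ s) (h2 : s ≤ t) (h3 : t ≤ T)
    (h4 : t₀ < t)
    (hw1 : IntegrableOn (fun σ => |w σ|) (Set.Icc t₀ T))
    (hw2 : IntegrableOn (fun σ => w σ ^ 2) (Set.Icc t₀ T)) :
    ∫ σ in t₀..s, |w σ| ≤ Real.sqrt (t - t₀) * Real.sqrt (∫ σ in t₀..T, w σ ^ 2) := by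
  have htT : t₀ ≤ T := h4.le.trans h3
  set I := ∫ σ in t₀..T, w σ ^ 2 with hIdef
  have ii2T : IntervalIntegrable (fun σ => w σ ^ 2) volume t₀ T :=
    (intervalIntegrable_iff_integrableOn_Icc_of_le htT).mpr hw2
  have hI0 : 0 ≤ I := intervalIntegral.integral_nonneg htT (fun σ _ => sq_nonneg _)
  have ii1 : IntervalIntegrable (fun σ => |w σ|) volume t₀ s :=
    (intervalIntegrable_iff_integrableOn_Icc_of_le h1).mpr
      (hw1.mono_set (Set.Icc_subset_Icc le_rfl (h2.trans h3)))
  have ii2 : IntervalIntegrable (fun σ => w σ ^ 2) volume t₀ s :=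
    (intervalIntegrable_iff_integrableOn_Icc_of_le h1).mpr
      (hw2.mono_set (Set.Icc_subset_Icc le_rfl (h2.trans h3)))
  have hIs : (∫ σ in t₀..s, w σ ^ 2) ≤ I :=
    intervalIntegral.integral_mono_interval le_rfl h1 (h2.trans h3)
      (Filter.Eventually.of_forall fun σ => sq_nonneg _) ii2T
  have step : ∀ ε : ℝ, 0 < ε → (∫ σ in t₀..s, |w σ|) ≤ I / (2 * ε) + ε / 2 * (t - t₀) := by
    intro ε hε
    have hmono : (∫ σ in t₀..s, |w σ|) ≤ ∫ σ in t₀..s, (w σ ^ 2 / (2 * ε) + ε / 2) := by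
      refine intervalIntegral.integral_mono_on h1 ii1
        ((ii2.div_const (2 * ε)).add intervalIntegrable_const) (fun σ _ => ?_)
      have hd : |w σ| - ε / 2 ≤ w σ ^ 2 / (2 * ε) := by
        rw [le_div_iff₀ (by positivity : (0:ℝ) < 2 * ε)]
        nlinarith [sq_nonneg (|w σ| - ε), sq_abs (w σ)]
      linarith
    have hcalc : (∫ σ in t₀..s, (w σ ^ 2 / (2 * ε) + ε / 2))
        = (∫ σ in t₀..s, w σ ^ 2) / (2 * ε) + (s - t₀) * (ε / 2) := by
      rw [intervalIntegral.integral_add (ii2.div_const (2 * ε)) intervalIntegrable_const,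
        intervalIntegral.integral_div, intervalIntegral.integral_const, smul_eq_mul]
    have h5 : (∫ σ in t₀..s, w σ ^ 2) / (2 * ε) ≤ I / (2 * ε) :=
      div_le_div_of_nonneg_right hIs (by linarith) |>.trans_eq rfl
    nlinarith [hmono, hcalc, h5]
  rcases eq_or_lt_of_le hI0 with hI | hI
  · have hX : (∫ σ in t₀..s, |w σ|) ≤ 0 := by
      refine le_of_forall_pos_le_add (fun δ hδ => ?_)
      have hτ : 0 < t - t₀ := by linarith
      have := step (2 * δ / (t - t₀)) (by positivity)
      rw [← hI] at this
      have : (∫ σ in t₀..s, |w σ|) ≤ 2 * δ / (t - t₀) / 2 * (t - t₀) := by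
        simpa using this
      calc (∫ σ in t₀..s, |w σ|) ≤ 2 * δ / (t - t₀) / 2 * (t - t₀) := this
        _ = δ := by field_simp
        _ ≤ 0 + δ := by linarith
    rw [← hI]
    simpa using hX
  · have hτ : 0 < t - t₀ := by linarith
    have hsI : 0 < Real.sqrt I := Real.sqrt_pos.mpr hI
    have hsτ : 0 < Real.sqrt (t - t₀) := Real.sqrt_pos.mpr hτ
    have e1 : Real.sqrt I ^ 2 = I := Real.sq_sqrt hI0
    have e2 : Real.sqrt (t - t₀) ^ 2 = t - t₀ := Real.sq_sqrt hτ.le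
    have hε : 0 < Real.sqrt I / Real.sqrt (t - t₀) := by positivity
    have := step _ hε
    have heq : I / (2 * (Real.sqrt I / Real.sqrt (t - t₀)))
        + Real.sqrt I / Real.sqrt (t - t₀) / 2 * (t - t₀)
        = Real.sqrt (t - t₀) * Real.sqrt I := by
      field_simp
      nlinarith [e1, e2]
    linarith [this, heq.le]

theorem stmt_2 (n : ℕ) (t₀ T k₀ k₁ c₁ M Cx : ℝ) (ht : t₀ ≤ T)
    (f₀ f₁ : EuclideanSpace ℝ (Fin n) → EuclideanSpace ℝ (Fin n))
    (hf₀lip : ∀ y y', ‖f₀ y - f₀ y'‖ ≤ k₀ * ‖y - y'‖)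
    (hf₁lip : ∀ y y', ‖f₁ y - f₁ y'‖ ≤ k₁ * ‖y - y'‖)
    (hf₁ : ∀ y, ‖f₁ y‖ ≤ c₁ * (1 + ‖y‖))
    (u v : ℝ → ℝ) (hu_meas : Measurable u) (hv_meas : Measurable v)
    (hu : ∀ᵐ t ∂(volume.restrict (Set.Icc t₀ T)), |u t| ≤ M)
    (hv : ∀ᵐ t ∂(volume.restrict (Set.Icc t₀ T)), |v t| ≤ M)
    (xu xv : ℝ → EuclideanSpace ℝ (Fin n)) (x₀ : EuclideanSpace ℝ (Fin n))
    (hxu : ContinuousOn xu (Set.Icc t₀ T)) (hxv : ContinuousOn xv (Set.Icc t₀ T))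
    (hequ : ∀ t ∈ Set.Icc t₀ T,
      xu t = x₀ + ∫ σ in t₀..t, (f₀ (xu σ) + u σ • f₁ (xu σ)))
    (heqv : ∀ t ∈ Set.Icc t₀ T,
      xv t = x₀ + ∫ σ in t₀..t, (f₀ (xv σ) + v σ • f₁ (xv σ)))
    (hbu : ∀ t ∈ Set.Icc t₀ T, ‖xu t‖ ≤ Cx)
    (hbv : ∀ t ∈ Set.Icc t₀ T, ‖xv t‖ ≤ Cx) :
    ∀ t ∈ Set.Icc t₀ T,
      ‖xu t - xv t‖ ≤ c₁ * (1 + Cx) * Real.sqrt (t - t₀) *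
        Real.exp ((k₀ + M * k₁) * (t - t₀)) *
        Real.sqrt (∫ σ in t₀..T, (u σ - v σ) ^ 2) := by
  have hc₁ : 0 ≤ c₁ := by
    have h := hf₁ 0
    simp only [norm_zero, add_zero, mul_one] at h
    exact (norm_nonneg _).trans h
  have hCx : 0 ≤ Cx := le_trans (norm_nonneg _) (hbu t₀ ⟨le_rfl, ht⟩)
  intro t htmem
  obtain ⟨ht₀t, htT⟩ := htmem
  rcases eq_or_lt_of_le ht₀t with heq | hlt
  · -- t = t₀
    subst heq
    have h0 : xu t₀ - xv t₀ = 0 := by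
      rw [hequ t₀ ⟨le_rfl, ht⟩, heqv t₀ ⟨le_rfl, ht⟩]
      simp
    rw [h0, norm_zero, sub_self, Real.sqrt_zero, mul_zero, zero_mul, zero_mul]
  · rcases subsingleton_or_nontrivial (EuclideanSpace ℝ (Fin n)) with hsub | hnt
    · haveI := hsub
      have h0 : xu t - xv t = 0 := Subsingleton.elim _ _
      rw [h0, norm_zero]
      exact mul_nonneg (mul_nonneg (mul_nonneg (mul_nonneg hc₁ (by linarith))
        (Real.sqrt_nonneg _)) (Real.exp_pos _).le) (Real.sqrt_nonneg _)
    · -- main case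
      obtain ⟨y, y', hyy⟩ := exists_pair_ne (EuclideanSpace ℝ (Fin n))
      have hny : 0 < ‖y - y'‖ := by rwa [norm_pos_iff, sub_ne_zero]
      have hk₀ : 0 ≤ k₀ :=
        (mul_nonneg_iff_of_pos_right hny).mp
          ((norm_nonneg (f₀ y - f₀ y')).trans (hf₀lip y y'))
      have hk₁ : 0 ≤ k₁ :=
        (mul_nonneg_iff_of_pos_right hny).mp
          ((norm_nonneg (f₁ y - f₁ y')).trans (hf₁lip y y'))
      have ht₀T : t₀ < T := lt_of_lt_of_le hlt htT
      have hM : 0 ≤ M := by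
        have hμ : volume.restrict (Set.Icc t₀ T) ≠ 0 := by
          intro h
          have h2 : (volume.restrict (Set.Icc t₀ T)) Set.univ = 0 := by rw [h]; simp
          rw [Measure.restrict_apply_univ, Real.volume_Icc, ENNReal.ofReal_eq_zero] at h2
          linarith
        haveI : (ae (volume.restrict (Set.Icc t₀ T))).NeBot := ae_neBot.2 hμ
        obtain ⟨t', ht'⟩ := hu.exists
        exact (abs_nonneg _).trans ht'
      have hf₀c : Continuous f₀ := by
        refine (LipschitzWith.of_dist_le_mul (K := Real.toNNReal k₀) fun y1 y2 => ?_).continuous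
        rw [dist_eq_norm, dist_eq_norm]
        exact (hf₀lip y1 y2).trans
          (mul_le_mul_of_nonneg_right (Real.le_coe_toNNReal k₀) (norm_nonneg _))
      have hf₁c : Continuous f₁ := by
        refine (LipschitzWith.of_dist_le_mul (K := Real.toNNReal k₁) fun y1 y2 => ?_).continuous
        rw [dist_eq_norm, dist_eq_norm]
        exact (hf₁lip y1 y2).trans
          (mul_le_mul_of_nonneg_right (Real.le_coe_toNNReal k₁) (norm_nonneg _))
      set Cw : ℝ := c₁ * (1 + Cx) with hCwdef
      have hCw : 0 ≤ Cw := mul_nonneg hc₁ (by linarith)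
      set L : ℝ := k₀ + M * k₁ with hLdef
      have hL : 0 ≤ L := add_nonneg hk₀ (mul_nonneg hM hk₁)
      set w : ℝ → ℝ := fun σ => u σ - v σ with hwdef
      set I : ℝ := ∫ σ in t₀..T, w σ ^ 2 with hIdef
      set φ : ℝ → ℝ := fun σ => ‖xu σ - xv σ‖ with hφdef
      have hφc : ContinuousOn φ (Set.Icc t₀ T) := (hxu.sub hxv).norm
      set gu : ℝ → EuclideanSpace ℝ (Fin n) := fun σ => f₀ (xu σ) + u σ • f₁ (xu σ) with hgudef
      set gv : ℝ → EuclideanSpace ℝ (Fin n) := fun σ => f₀ (xv σ) + v σ • f₁ (xv σ) with hgvdef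
      have hconst : ∀ C : ℝ, IntegrableOn (fun _ : ℝ => C) (Set.Icc t₀ T) := fun C =>
        integrableOn_const measure_Icc_lt_top.ne
      have hf₁bu : ∀ σ ∈ Set.Icc t₀ T, ‖f₁ (xu σ)‖ ≤ Cw := by
        intro σ hσ
        refine (hf₁ _).trans ?_
        exact mul_le_mul_of_nonneg_left (by linarith [hbu σ hσ]) hc₁
      have hf₁bv : ∀ σ ∈ Set.Icc t₀ T, ‖f₁ (xv σ)‖ ≤ Cw := by
        intro σ hσ
        refine (hf₁ _).trans ?_
        exact mul_le_mul_of_nonneg_left (by linarith [hbv σ hσ]) hc₁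
      have hgu_int : IntegrableOn gu (Set.Icc t₀ T) := by
        refine Integrable.add ((hf₀c.comp_continuousOn hxu).integrableOn_Icc) ?_
        refine Integrable.mono' (hconst (M * Cw))
          (hu_meas.aestronglyMeasurable.restrict.smul
            ((hf₁c.comp_continuousOn hxu).aestronglyMeasurable measurableSet_Icc)) ?_
        filter_upwards [hu, ae_restrict_mem measurableSet_Icc] with σ hσM hσmem
        rw [norm_smul, Real.norm_eq_abs]
        exact mul_le_mul hσM (hf₁bu σ hσmem) (norm_nonneg _) hM
      have hgv_int : IntegrableOn gv (Set.Icc t₀ T) := by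
        refine Integrable.add ((hf₀c.comp_continuousOn hxv).integrableOn_Icc) ?_
        refine Integrable.mono' (hconst (M * Cw))
          (hv_meas.aestronglyMeasurable.restrict.smul
            ((hf₁c.comp_continuousOn hxv).aestronglyMeasurable measurableSet_Icc)) ?_
        filter_upwards [hv, ae_restrict_mem measurableSet_Icc] with σ hσM hσmem
        rw [norm_smul, Real.norm_eq_abs]
        exact mul_le_mul hσM (hf₁bv σ hσmem) (norm_nonneg _) hM
      have habs_int : IntegrableOn (fun σ => |w σ|) (Set.Icc t₀ T) := by
        refine Integrable.mono' (hconst (2 * M))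
          ((hu_meas.sub hv_meas).abs.aestronglyMeasurable.restrict) ?_
        filter_upwards [hu, hv] with σ hσu hσv
        rw [Real.norm_eq_abs, abs_abs]
        calc |u σ - v σ| ≤ |u σ| + |v σ| := abs_sub _ _
          _ ≤ 2 * M := by linarith
      have hsq_int : IntegrableOn (fun σ => w σ ^ 2) (Set.Icc t₀ T) := by
        refine Integrable.mono' (hconst ((2 * M) ^ 2))
          (((hu_meas.sub hv_meas).pow_const 2).aestronglyMeasurable.restrict) ?_
        filter_upwards [hu, hv] with σ hσu hσv
        rw [Real.norm_eq_abs, abs_of_nonneg (sq_nonneg _), ← sq_abs]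
        have h1 : |u σ - v σ| ≤ 2 * M := by
          calc |u σ - v σ| ≤ |u σ| + |v σ| := abs_sub _ _
            _ ≤ 2 * M := by linarith
        nlinarith [abs_nonneg (u σ - v σ)]
      have hA : 0 ≤ Cw * (Real.sqrt (t - t₀) * Real.sqrt I) :=
        mul_nonneg hCw (mul_nonneg (Real.sqrt_nonneg _) (Real.sqrt_nonneg _))
      have hkey : ∀ s ∈ Set.Icc t₀ t,
          φ s ≤ Cw * (Real.sqrt (t - t₀) * Real.sqrt I) + L * ∫ σ in t₀..s, φ σ := by
        intro s hs
        have hsT : s ∈ Set.Icc t₀ T := ⟨hs.1, hs.2.trans htT⟩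
        have hsub' : Set.Icc t₀ s ⊆ Set.Icc t₀ T := Set.Icc_subset_Icc le_rfl hsT.2
        have iiGu : IntervalIntegrable gu volume t₀ s :=
          (intervalIntegrable_iff_integrableOn_Icc_of_le hs.1).mpr (hgu_int.mono_set hsub')
        have iiGv : IntervalIntegrable gv volume t₀ s :=
          (intervalIntegrable_iff_integrableOn_Icc_of_le hs.1).mpr (hgv_int.mono_set hsub')
        have iiφ : IntervalIntegrable φ volume t₀ s :=
          (intervalIntegrable_iff_integrableOn_Icc_of_le hs.1).mpr
            ((hφc.mono hsub').integrableOn_Icc)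
        have iiabs : IntervalIntegrable (fun σ => |w σ|) volume t₀ s :=
          (intervalIntegrable_iff_integrableOn_Icc_of_le hs.1).mpr (habs_int.mono_set hsub')
        have hdiff : xu s - xv s = ∫ σ in t₀..s, (gu σ - gv σ) := by
          rw [hequ s hsT, heqv s hsT, intervalIntegral.integral_sub iiGu iiGv]
          abel
        have hae : (fun σ => ‖gu σ - gv σ‖)
            ≤ᵐ[volume.restrict (Set.Icc t₀ s)] fun σ => L * φ σ + Cw * |w σ| := by
          have hu' := ae_restrict_of_ae_restrict_of_subset hsub' hu
          filter_upwards [hu', ae_restrict_mem measurableSet_Icc] with σ hσu hσmem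
          have hσT : σ ∈ Set.Icc t₀ T := hsub' hσmem
          have hdecomp : gu σ - gv σ = (f₀ (xu σ) - f₀ (xv σ))
              + (u σ • (f₁ (xu σ) - f₁ (xv σ))) + ((u σ - v σ) • f₁ (xv σ)) := by
            simp only [hgudef, hgvdef, smul_sub, sub_smul]
            abel
          rw [hdecomp]
          have h1 : ‖f₀ (xu σ) - f₀ (xv σ)‖ ≤ k₀ * φ σ := hf₀lip _ _
          have h2 : ‖u σ • (f₁ (xu σ) - f₁ (xv σ))‖ ≤ M * (k₁ * φ σ) := by
            rw [norm_smul, Real.norm_eq_abs]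
            exact mul_le_mul hσu (hf₁lip _ _) (norm_nonneg _) hM
          have h3 : ‖(u σ - v σ) • f₁ (xv σ)‖ ≤ |w σ| * Cw := by
            rw [norm_smul, Real.norm_eq_abs]
            exact mul_le_mul_of_nonneg_left (hf₁bv σ hσT) (abs_nonneg _)
          calc ‖f₀ (xu σ) - f₀ (xv σ) + u σ • (f₁ (xu σ) - f₁ (xv σ))
                + (u σ - v σ) • f₁ (xv σ)‖
              ≤ ‖f₀ (xu σ) - f₀ (xv σ)‖ + ‖u σ • (f₁ (xu σ) - f₁ (xv σ))‖
                + ‖(u σ - v σ) • f₁ (xv σ)‖ := norm_add₃_le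
            _ ≤ k₀ * φ σ + M * (k₁ * φ σ) + |w σ| * Cw := by linarith
            _ = L * φ σ + Cw * |w σ| := by rw [hLdef]; ring
        have hCS : (∫ σ in t₀..s, |w σ|) ≤ Real.sqrt (t - t₀) * Real.sqrt I :=
          cs_int hs.1 hs.2 htT hlt habs_int hsq_int
        calc φ s = ‖∫ σ in t₀..s, (gu σ - gv σ)‖ := by
              show ‖xu s - xv s‖ = _; rw [hdiff]
          _ ≤ ∫ σ in t₀..s, ‖gu σ - gv σ‖ :=
              intervalIntegral.norm_integral_le_integral_norm hs.1
          _ ≤ ∫ σ in t₀..s, (L * φ σ + Cw * |w σ|) := by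
              refine intervalIntegral.integral_mono_ae_restrict hs.1
                (iiGu.sub iiGv).norm ((iiφ.const_mul L).add (iiabs.const_mul Cw)) hae
          _ = L * (∫ σ in t₀..s, φ σ) + Cw * ∫ σ in t₀..s, |w σ| := by
              rw [intervalIntegral.integral_add (iiφ.const_mul L) (iiabs.const_mul Cw),
                intervalIntegral.integral_const_mul, intervalIntegral.integral_const_mul]
          _ ≤ L * (∫ σ in t₀..s, φ σ) + Cw * (Real.sqrt (t - t₀) * Real.sqrt I) := by
              have := mul_le_mul_of_nonneg_left hCS hCw
              linarith
          _ = Cw * (Real.sqrt (t - t₀) * Real.sqrt I) + L * ∫ σ in t₀..s, φ σ := by ring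
      have hfin := gronwall_int hlt.le hL hA (hφc.mono (Set.Icc_subset_Icc le_rfl htT))
        (fun s _ => norm_nonneg _) hkey
      calc ‖xu t - xv t‖ = φ t := rfl
        _ ≤ Cw * (Real.sqrt (t - t₀) * Real.sqrt I) * Real.exp (L * (t - t₀)) := hfin
        _ = c₁ * (1 + Cx) * Real.sqrt (t - t₀) * Real.exp ((k₀ + M * k₁) * (t - t₀))
            * Real.sqrt I := by rw [hCwdef, hLdef]; ring
end

section
/- Let (u_k) be a sequence in L^∞(t₀,T;ℝ) with |u_k(t)| ≤ M a.e., converging weak-* in L^∞ to ū, and let (x_k) be continuous functions on [t₀,T] converging uniformly to x̄. Let f₀, f₁ : ℝⁿ → ℝⁿ be Lipschitz with sublinear growth. If each x_k satisfies x_k(t) = x₀ + ∫_{t₀}^t [f₀(x_k(σ)) + f₁(x_k(σ))u_k(σ)] dσ for all t, then x̄ satisfies x̄(t) = x₀ + ∫_{t₀}^t [f₀(x̄(σ)) + f₁(x̄(σ))ū(σ)] dσ for all t ∈ [t₀,T]. -/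
open MeasureTheory Filter

private lemma lip_cont {n : ℕ} (f : EuclideanSpace ℝ (Fin n) → EuclideanSpace ℝ (Fin n)) (k : ℝ)
    (h : ∀ y y', ‖f y - f y'‖ ≤ k * ‖y - y'‖) : Continuous f := by
  have hl : LipschitzWith (Real.toNNReal k) f := by
    apply LipschitzWith.of_dist_le_mul
    intro a b
    rw [dist_eq_norm, dist_eq_norm]
    calc ‖f a - f b‖ ≤ k * ‖a - b‖ := h a b
      _ ≤ Real.toNNReal k * ‖a - b‖ :=
        mul_le_mul_of_nonneg_right (Real.le_coe_toNNReal k) (norm_nonneg _)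
  exact hl.continuous

private lemma coord_abs_le_norm {n : ℕ} (y : EuclideanSpace ℝ (Fin n)) (i : Fin n) :
    |y i| ≤ ‖y‖ := by
  rw [EuclideanSpace.norm_eq]
  have h1 : |y i| = Real.sqrt (‖y i‖ ^ 2) := by
    rw [Real.sqrt_sq (norm_nonneg _), Real.norm_eq_abs]
  rw [h1]
  apply Real.sqrt_le_sqrt
  exact Finset.single_le_sum (f := fun j => ‖y j‖ ^ 2) (fun j _ => sq_nonneg _) (Finset.mem_univ i)

private lemma ubar_bound (t₀ T M : ℝ) (ht : t₀ ≤ T) (u : ℕ → ℝ → ℝ) (ubar : ℝ → ℝ)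
    (hu_meas : ∀ k, Measurable (u k)) (hubar_meas : Measurable ubar)
    (hu_bd : ∀ k, ∀ᵐ t ∂(volume.restrict (Set.Icc t₀ T)), |u k t| ≤ M)
    (hweak : ∀ φ : ℝ → ℝ, Integrable φ (volume.restrict (Set.Icc t₀ T)) →
      Tendsto (fun k => ∫ t in t₀..T, u k t * φ t) atTop
        (nhds (∫ t in t₀..T, ubar t * φ t))) :
    ∀ᵐ t ∂(volume.restrict (Set.Icc t₀ T)), |ubar t| ≤ M := by
  haveI : IsFiniteMeasure (volume.restrict (Set.Icc t₀ T)) :=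
    ⟨by rw [Measure.restrict_apply_univ]; exact measure_Icc_lt_top⟩
  have habs : Measurable fun τ => |ubar τ| := hubar_meas.abs
  set sgn : ℝ → ℝ := fun τ => if 0 ≤ ubar τ then 1 else -1 with hsgn_def
  have hsgn_meas : Measurable sgn :=
    Measurable.ite (measurableSet_le measurable_const hubar_meas) measurable_const measurable_const
  have hsgn_abs : ∀ τ, |sgn τ| ≤ 1 := by
    intro τ; simp only [hsgn_def]; split_ifs <;> norm_num
  have hsgn_mul : ∀ τ, ubar τ * sgn τ = |ubar τ| := by
    intro τ; simp only [hsgn_def]; split_ifs with h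
    · rw [mul_one, abs_of_nonneg h]
    · rw [mul_neg_one, abs_of_neg (not_le.mp h)]
  -- key: each truncated excess set is null
  have key : ∀ ε : ℝ, 0 < ε → ∀ N : ℝ,
      volume (Set.Ioc t₀ T ∩ (fun τ => |ubar τ|) ⁻¹' Set.Icc (M + ε) N) = 0 := by
    intro ε hε N
    set s : Set ℝ := Set.Ioc t₀ T ∩ (fun τ => |ubar τ|) ⁻¹' Set.Icc (M + ε) N with hs_def
    have hs : MeasurableSet s := measurableSet_Ioc.inter (habs measurableSet_Icc)
    have hsub : s ⊆ Set.Icc t₀ T := Set.inter_subset_left.trans Set.Ioc_subset_Icc_self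
    have hfin : volume s < ⊤ := ((measure_mono hsub).trans_lt measure_Icc_lt_top)
    haveI : IsFiniteMeasure (volume.restrict s) :=
      ⟨by rw [Measure.restrict_apply_univ]; exact hfin⟩
    set V : ℝ := (volume s).toReal with hV_def
    have hV0 : 0 ≤ V := ENNReal.toReal_nonneg
    set φ : ℝ → ℝ := s.indicator sgn with hφ_def
    have hφ_meas : Measurable φ := hsgn_meas.indicator hs
    have hφ_int : Integrable φ (volume.restrict (Set.Icc t₀ T)) := by
      refine Integrable.mono' (integrable_const 1) hφ_meas.aestronglyMeasurable
        (Eventually.of_forall fun τ => ?_)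
      rw [Real.norm_eq_abs]
      by_cases hτ : τ ∈ s
      · simpa [hφ_def, Set.indicator_of_mem hτ] using hsgn_abs τ
      · simp [hφ_def, Set.indicator_of_notMem hτ]
    have hrew : ∀ z : ℝ → ℝ, (∫ τ in t₀..T, z τ * φ τ) = ∫ τ in s, z τ * sgn τ := by
      intro z
      rw [intervalIntegral.integral_of_le ht]
      have hfun : (fun τ => z τ * φ τ) = s.indicator fun τ => z τ * sgn τ := by
        funext τ
        by_cases hτ : τ ∈ s
        · simp [hφ_def, Set.indicator_of_mem hτ]
        · simp [hφ_def, Set.indicator_of_notMem hτ]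
      rw [hfun, setIntegral_indicator hs,
        Set.inter_eq_self_of_subset_right Set.inter_subset_left]
    have hlim := hweak φ hφ_int
    rw [hrew] at hlim
    have hlim' : Tendsto (fun k => ∫ τ in s, u k τ * sgn τ) atTop
        (nhds (∫ τ in s, ubar τ * sgn τ)) := by
      refine Tendsto.congr (fun k => ?_) hlim
      rw [hrew]
    -- upper bound for each k
    have hup : ∀ k, ∫ τ in s, u k τ * sgn τ ≤ M * V := by
      intro k
      have hbd : ∀ᵐ τ ∂volume.restrict s, ‖u k τ * sgn τ‖ ≤ M := by
        filter_upwards [ae_restrict_of_ae_restrict_of_subset hsub (hu_bd k)] with τ h1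
        rw [Real.norm_eq_abs, abs_mul]
        calc |u k τ| * |sgn τ| ≤ M * 1 :=
              mul_le_mul h1 (hsgn_abs τ) (abs_nonneg _) ((abs_nonneg _).trans h1)
          _ = M := mul_one M
      have := norm_setIntegral_le_of_norm_le_const_ae hfin hbd
      rw [Real.norm_eq_abs] at this
      exact (le_abs_self _).trans this
    -- lower bound for the limit
    have habs_int : IntegrableOn (fun τ => |ubar τ|) s := by
      refine Integrable.mono' (integrable_const N) habs.aestronglyMeasurable ?_
      filter_upwards [ae_restrict_mem hs] with τ hτ
      rw [Real.norm_eq_abs, abs_abs]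
      exact hτ.2.2
    have hlow : (M + ε) * V ≤ ∫ τ in s, ubar τ * sgn τ := by
      have h1 : ∫ τ in s, ubar τ * sgn τ = ∫ τ in s, |ubar τ| :=
        integral_congr_ae (Eventually.of_forall fun τ => hsgn_mul τ)
      have h2 : ∫ τ in s, (M + ε) ≤ ∫ τ in s, |ubar τ| :=
        setIntegral_mono_on (integrableOn_const hfin.ne) habs_int hs
          (fun τ hτ => hτ.2.1)
      rw [setIntegral_const, smul_eq_mul, mul_comm] at h2
      rw [h1]; exact h2
    have hupbar : ∫ τ in s, ubar τ * sgn τ ≤ M * V :=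
      le_of_tendsto hlim' (Eventually.of_forall hup)
    have hV : V = 0 := by nlinarith
    rw [hV_def] at hV
    exact (ENNReal.toReal_eq_zero_iff _).mp hV |>.resolve_right hfin.ne
  -- union argument
  have hbad : volume {τ | τ ∈ Set.Ioc t₀ T ∧ M < |ubar τ|} = 0 := by
    have hsub2 : {τ | τ ∈ Set.Ioc t₀ T ∧ M < |ubar τ|} ⊆
        ⋃ j : ℕ, (Set.Ioc t₀ T ∩ (fun τ => |ubar τ|) ⁻¹' Set.Icc (M + 1/(j+1)) (j+1)) := by
      rintro τ ⟨hτ1, hτ2⟩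
      obtain ⟨j1, hj1⟩ := exists_nat_one_div_lt (show (0:ℝ) < |ubar τ| - M by linarith)
      obtain ⟨j2, hj2⟩ := exists_nat_ge (|ubar τ|)
      refine Set.mem_iUnion.mpr ⟨max j1 j2, hτ1, ?_, ?_⟩
      · have hle : (j1 : ℝ) + 1 ≤ (max j1 j2 : ℕ) + 1 := by
          have : (j1:ℝ) ≤ ((max j1 j2 : ℕ) : ℝ) := by exact_mod_cast le_max_left j1 j2
          linarith
        have := one_div_le_one_div_of_le (by positivity : (0:ℝ) < (j1:ℝ)+1) hle
        linarith
      · have hle2 : (j2:ℝ) ≤ ((max j1 j2 : ℕ) : ℝ) := by exact_mod_cast le_max_right j1 j2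
        show |ubar τ| ≤ ((max j1 j2 : ℕ) : ℝ) + 1
        linarith
    refine measure_mono_null hsub2 (measure_iUnion_null fun j => key (1/(j+1)) (by positivity) (j+1))
  rw [ae_restrict_iff' measurableSet_Icc]
  have h0 : ∀ᵐ τ ∂(volume : Measure ℝ), ¬(τ ∈ Set.Ioc t₀ T ∧ M < |ubar τ|) := by
    rw [ae_iff]; simpa [not_not, Set.mem_Ioc, and_assoc] using hbad
  have h1 : ∀ᵐ τ ∂(volume : Measure ℝ), τ ≠ t₀ := by
    rw [ae_iff]
    simpa [not_not, Set.setOf_eq_eq_singleton] using Real.volume_singleton (a := t₀)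
  filter_upwards [h0, h1] with τ hτ hτ0 hmem
  by_contra h
  exact hτ ⟨⟨lt_of_le_of_ne hmem.1 (Ne.symm hτ0), hmem.2⟩, not_le.mp h⟩

theorem stmt_6 (n : ℕ) (t₀ T M k₀ k₁ c₀ c₁ : ℝ) (ht : t₀ ≤ T)
    (f₀ f₁ : EuclideanSpace ℝ (Fin n) → EuclideanSpace ℝ (Fin n))
    (hf₀lip : ∀ y y', ‖f₀ y - f₀ y'‖ ≤ k₀ * ‖y - y'‖)
    (hf₁lip : ∀ y y', ‖f₁ y - f₁ y'‖ ≤ k₁ * ‖y - y'‖)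
    (hf₀ : ∀ y, ‖f₀ y‖ ≤ c₀ * (1 + ‖y‖))
    (hf₁ : ∀ y, ‖f₁ y‖ ≤ c₁ * (1 + ‖y‖))
    (u : ℕ → ℝ → ℝ) (ubar : ℝ → ℝ)
    (hu_meas : ∀ k, Measurable (u k)) (hubar_meas : Measurable ubar)
    (hu_bd : ∀ k, ∀ᵐ t ∂(volume.restrict (Set.Icc t₀ T)), |u k t| ≤ M)
    (hweak : ∀ φ : ℝ → ℝ, Integrable φ (volume.restrict (Set.Icc t₀ T)) →
      Tendsto (fun k => ∫ t in t₀..T, u k t * φ t) atTop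
        (nhds (∫ t in t₀..T, ubar t * φ t)))
    (x : ℕ → ℝ → EuclideanSpace ℝ (Fin n)) (xbar : ℝ → EuclideanSpace ℝ (Fin n))
    (x₀ : EuclideanSpace ℝ (Fin n))
    (hx_cont : ∀ k, ContinuousOn (x k) (Set.Icc t₀ T))
    (hunif : TendstoUniformlyOn x xbar atTop (Set.Icc t₀ T))
    (heq : ∀ k, ∀ t ∈ Set.Icc t₀ T,
      x k t = x₀ + ∫ σ in t₀..t, (f₀ (x k σ) + u k σ • f₁ (x k σ))) :
    ∀ t ∈ Set.Icc t₀ T,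
      xbar t = x₀ + ∫ σ in t₀..t, (f₀ (xbar σ) + ubar σ • f₁ (xbar σ)) := by
  classical
  have hf₀c : Continuous f₀ := lip_cont f₀ k₀ hf₀lip
  have hf₁c : Continuous f₁ := lip_cont f₁ k₁ hf₁lip
  have hxbarc : ContinuousOn xbar (Set.Icc t₀ T) :=
    hunif.continuousOn (Eventually.of_forall hx_cont).frequently
  have hubar_bd := ubar_bound t₀ T M ht u ubar hu_meas hubar_meas hu_bd hweak
  haveI : IsFiniteMeasure (volume.restrict (Set.Icc t₀ T)) :=
    ⟨by rw [Measure.restrict_apply_univ]; exact measure_Icc_lt_top⟩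
  intro t htmem
  obtain ⟨ht₀t, htT⟩ := htmem
  have hsubIcc : Set.Icc t₀ t ⊆ Set.Icc t₀ T := Set.Icc_subset_Icc le_rfl htT
  have hsubIoc : Set.Ioc t₀ t ⊆ Set.Icc t₀ T := Set.Ioc_subset_Icc_self.trans hsubIcc
  have hfinIoc : volume (Set.Ioc t₀ t) < ⊤ := measure_Ioc_lt_top
  haveI : IsFiniteMeasure (volume.restrict (Set.Ioc t₀ t)) :=
    ⟨by rw [Measure.restrict_apply_univ]; exact hfinIoc⟩
  -- continuity and bounds for f₁ ∘ xbar
  have hw_cont : ContinuousOn (fun σ => f₁ (xbar σ)) (Set.Icc t₀ T) :=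
    hf₁c.comp_continuousOn hxbarc
  obtain ⟨Cw, hCw⟩ := isCompact_Icc.exists_bound_of_continuousOn hw_cont
  have hCw0 : 0 ≤ Cw := (norm_nonneg _).trans (hCw t₀ ⟨le_rfl, ht⟩)
  have hw_aesm : AEStronglyMeasurable (fun σ => f₁ (xbar σ)) (volume.restrict (Set.Ioc t₀ t)) :=
    (hw_cont.mono hsubIoc).aestronglyMeasurable measurableSet_Ioc
  have hmemIoc : ∀ᵐ σ ∂volume.restrict (Set.Ioc t₀ t), σ ∈ Set.Ioc t₀ t :=
    ae_restrict_mem measurableSet_Ioc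
  have hubar_bd' : ∀ᵐ σ ∂volume.restrict (Set.Ioc t₀ t), |ubar σ| ≤ M :=
    ae_restrict_of_ae_restrict_of_subset hsubIoc hubar_bd
  have hu_bd' : ∀ k, ∀ᵐ σ ∂volume.restrict (Set.Ioc t₀ t), |u k σ| ≤ M := fun k =>
    ae_restrict_of_ae_restrict_of_subset hsubIoc (hu_bd k)
  -- generic integrability of products
  have hsmul_int : ∀ (z : ℝ → ℝ) (v : ℝ → EuclideanSpace ℝ (Fin n)), Measurable z →
      (∀ᵐ σ ∂volume.restrict (Set.Ioc t₀ t), |z σ| ≤ M) →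
      AEStronglyMeasurable v (volume.restrict (Set.Ioc t₀ t)) →
      ∀ C : ℝ, (∀ᵐ σ ∂volume.restrict (Set.Ioc t₀ t), ‖v σ‖ ≤ C) →
      IntegrableOn (fun σ => z σ • v σ) (Set.Ioc t₀ t) := by
    intro z v hz hzbd hv C hvbd
    refine Integrable.mono' (integrable_const (M * C)) (hz.aestronglyMeasurable.smul hv) ?_
    filter_upwards [hzbd, hvbd] with σ h1 h2
    rw [norm_smul, Real.norm_eq_abs]
    exact mul_le_mul h1 h2 (norm_nonneg _) ((abs_nonneg _).trans h1)
  have hcont_int : ∀ v : ℝ → EuclideanSpace ℝ (Fin n), ContinuousOn v (Set.Icc t₀ T) →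
      IntegrableOn v (Set.Ioc t₀ t) := fun v hv =>
    ((hv.mono hsubIcc).integrableOn_Icc).mono_set Set.Ioc_subset_Icc_self
  have hwbd' : ∀ᵐ σ ∂volume.restrict (Set.Ioc t₀ t), ‖f₁ (xbar σ)‖ ≤ Cw := by
    filter_upwards [hmemIoc] with σ hσ; exact hCw σ (hsubIoc hσ)
  have hQint : ∀ k, IntegrableOn (fun σ => u k σ • f₁ (xbar σ)) (Set.Ioc t₀ t) := fun k =>
    hsmul_int (u k) _ (hu_meas k) (hu_bd' k) hw_aesm Cw hwbd'
  have hQbarint : IntegrableOn (fun σ => ubar σ • f₁ (xbar σ)) (Set.Ioc t₀ t) :=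
    hsmul_int ubar _ hubar_meas hubar_bd' hw_aesm Cw hwbd'
  have hCks : ∀ k, ∃ C, ∀ σ ∈ Set.Icc t₀ T, ‖f₁ (x k σ)‖ ≤ C := fun k =>
    isCompact_Icc.exists_bound_of_continuousOn (hf₁c.comp_continuousOn (hx_cont k))
  choose Ck hCk using hCks
  have hf1xk_aesm : ∀ k, AEStronglyMeasurable (fun σ => f₁ (x k σ))
      (volume.restrict (Set.Ioc t₀ t)) := fun k =>
    ((hf₁c.comp_continuousOn (hx_cont k)).mono hsubIoc).aestronglyMeasurable measurableSet_Ioc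
  have hf0xbar_int : IntegrableOn (fun σ => f₀ (xbar σ)) (Set.Ioc t₀ t) :=
    hcont_int _ (hf₀c.comp_continuousOn hxbarc)
  have hgkint : ∀ k, IntegrableOn (fun σ => f₀ (x k σ) + u k σ • f₁ (x k σ)) (Set.Ioc t₀ t) := by
    intro k
    refine (hcont_int _ (hf₀c.comp_continuousOn (hx_cont k))).add ?_
    refine hsmul_int (u k) _ (hu_meas k) (hu_bd' k) (hf1xk_aesm k) (Ck k) ?_
    filter_upwards [hmemIoc] with σ hσ; exact hCk k σ (hsubIoc hσ)
  have hDint : ∀ k, IntegrableOn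
      (fun σ => (f₀ (x k σ) - f₀ (xbar σ)) + u k σ • (f₁ (x k σ) - f₁ (xbar σ)))
      (Set.Ioc t₀ t) := by
    intro k
    refine ((hcont_int _ (hf₀c.comp_continuousOn (hx_cont k))).sub
      (hcont_int _ (hf₀c.comp_continuousOn hxbarc))).add ?_
    refine hsmul_int (u k) _ (hu_meas k) (hu_bd' k) ((hf1xk_aesm k).sub hw_aesm) (Ck k + Cw) ?_
    filter_upwards [hmemIoc] with σ hσ
    exact (norm_sub_le _ _).trans (add_le_add (hCk k σ (hsubIoc hσ)) (hCw σ (hsubIoc hσ)))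
  -- weak convergence of the u-terms, coordinatewise
  have hQ : Tendsto (fun k => ∫ σ in Set.Ioc t₀ t, u k σ • f₁ (xbar σ)) atTop
      (nhds (∫ σ in Set.Ioc t₀ t, ubar σ • f₁ (xbar σ))) := by
    have hcoordInt : ∀ i : Fin n, Integrable
        ((Set.Ioc t₀ t).indicator fun σ => f₁ (xbar σ) i) (volume.restrict (Set.Icc t₀ T)) := by
      intro i
      have hcont : ContinuousOn (fun σ => f₁ (xbar σ) i) (Set.Icc t₀ T) :=
        (EuclideanSpace.proj (𝕜 := ℝ) i).continuous.comp_continuousOn hw_cont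
      refine Integrable.mono' (integrable_const Cw)
        ((hcont.aestronglyMeasurable measurableSet_Icc).indicator measurableSet_Ioc)
        (Eventually.of_forall fun σ => ?_)
      rw [Real.norm_eq_abs]
      by_cases hσ : σ ∈ Set.Ioc t₀ t
      · rw [Set.indicator_of_mem hσ]
        exact (coord_abs_le_norm _ i).trans (hCw σ (hsubIoc hσ))
      · rw [Set.indicator_of_notMem hσ]; simpa using hCw0
    have hrew : ∀ (z : ℝ → ℝ) (i : Fin n),
        (∫ τ in t₀..T, z τ * ((Set.Ioc t₀ t).indicator fun σ => f₁ (xbar σ) i) τ)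
          = ∫ σ in Set.Ioc t₀ t, z σ * f₁ (xbar σ) i := by
      intro z i
      rw [intervalIntegral.integral_of_le ht]
      have hfun : (fun τ => z τ * ((Set.Ioc t₀ t).indicator fun σ => f₁ (xbar σ) i) τ)
          = (Set.Ioc t₀ t).indicator fun σ => z σ * f₁ (xbar σ) i := by
        funext τ
        by_cases hτ : τ ∈ Set.Ioc t₀ t
        · simp [Set.indicator_of_mem hτ]
        · simp [Set.indicator_of_notMem hτ]
      rw [hfun, setIntegral_indicator measurableSet_Ioc,
        Set.inter_eq_self_of_subset_right (Set.Ioc_subset_Ioc_right htT)]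
    have hQi : ∀ i : Fin n, Tendsto (fun k => ∫ σ in Set.Ioc t₀ t, u k σ * f₁ (xbar σ) i) atTop
        (nhds (∫ σ in Set.Ioc t₀ t, ubar σ * f₁ (xbar σ) i)) := by
      intro i
      have h := hweak _ (hcoordInt i)
      rw [hrew ubar i] at h
      exact Tendsto.congr (fun k => hrew (u k) i) h
    have hproj : ∀ (z : ℝ → ℝ), IntegrableOn (fun σ => z σ • f₁ (xbar σ)) (Set.Ioc t₀ t) →
        ∀ i : Fin n, (∫ σ in Set.Ioc t₀ t, z σ • f₁ (xbar σ)) i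
          = ∫ σ in Set.Ioc t₀ t, z σ * f₁ (xbar σ) i := by
      intro z hz i
      have h := (EuclideanSpace.proj (𝕜 := ℝ) i).integral_comp_comm hz
      simpa [smul_eq_mul] using h.symm
    have hten : Tendsto
        (fun k => (EuclideanSpace.equiv (Fin n) ℝ) (∫ σ in Set.Ioc t₀ t, u k σ • f₁ (xbar σ)))
        atTop (nhds ((EuclideanSpace.equiv (Fin n) ℝ) (∫ σ in Set.Ioc t₀ t, ubar σ • f₁ (xbar σ)))) := by
      rw [tendsto_pi_nhds]
      intro i
      have h1 : ∀ k, (EuclideanSpace.equiv (Fin n) ℝ) (∫ σ in Set.Ioc t₀ t, u k σ • f₁ (xbar σ)) i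
          = ∫ σ in Set.Ioc t₀ t, u k σ * f₁ (xbar σ) i := fun k => hproj (u k) (hQint k) i
      have h2 : (EuclideanSpace.equiv (Fin n) ℝ) (∫ σ in Set.Ioc t₀ t, ubar σ • f₁ (xbar σ)) i
          = ∫ σ in Set.Ioc t₀ t, ubar σ * f₁ (xbar σ) i := hproj ubar hQbarint i
      rw [h2]
      exact Tendsto.congr (fun k => (h1 k).symm) (hQi i)
    have h3 := ((EuclideanSpace.equiv (Fin n) ℝ).symm.continuous.tendsto _).comp hten
    simpa [Function.comp_def] using h3
  -- the perturbation terms go to zero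
  have hP : Tendsto (fun k => ∫ σ in Set.Ioc t₀ t,
      ((f₀ (x k σ) - f₀ (xbar σ)) + u k σ • (f₁ (x k σ) - f₁ (xbar σ)))) atTop (nhds 0) := by
    rw [Metric.tendsto_atTop]
    intro ε hε
    set A : ℝ := |k₀| + |M| * |k₁| with hA_def
    have hA0 : 0 ≤ A := by positivity
    set C : ℝ := A * (volume (Set.Ioc t₀ t)).toReal + 1 with hC_def
    have hC : 0 < C := by positivity
    have hεC : 0 < ε / C := div_pos hε hC
    have hunif' := hunif
    rw [Metric.tendstoUniformlyOn_iff] at hunif'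
    obtain ⟨K, hK⟩ := (eventually_atTop).mp (hunif' (ε / C) hεC)
    refine ⟨K, fun k hk => ?_⟩
    have hptbd : ∀ᵐ σ ∂volume.restrict (Set.Ioc t₀ t),
        ‖(f₀ (x k σ) - f₀ (xbar σ)) + u k σ • (f₁ (x k σ) - f₁ (xbar σ))‖ ≤ A * (ε / C) := by
      filter_upwards [hmemIoc, hu_bd' k] with σ hσ hu
      have hd : ‖x k σ - xbar σ‖ ≤ ε / C := by
        have hdd := hK k hk σ (hsubIoc hσ)
        rw [dist_comm, dist_eq_norm] at hdd
        exact hdd.le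
      have e1 : ‖f₀ (x k σ) - f₀ (xbar σ)‖ ≤ |k₀| * (ε / C) := by
        calc ‖f₀ (x k σ) - f₀ (xbar σ)‖ ≤ k₀ * ‖x k σ - xbar σ‖ := hf₀lip _ _
          _ ≤ |k₀| * ‖x k σ - xbar σ‖ :=
            mul_le_mul_of_nonneg_right (le_abs_self k₀) (norm_nonneg _)
          _ ≤ |k₀| * (ε / C) := mul_le_mul_of_nonneg_left hd (abs_nonneg _)
      have e2 : ‖u k σ • (f₁ (x k σ) - f₁ (xbar σ))‖ ≤ |M| * (|k₁| * (ε / C)) := by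
        rw [norm_smul, Real.norm_eq_abs]
        have e3 : ‖f₁ (x k σ) - f₁ (xbar σ)‖ ≤ |k₁| * (ε / C) := by
          calc ‖f₁ (x k σ) - f₁ (xbar σ)‖ ≤ k₁ * ‖x k σ - xbar σ‖ := hf₁lip _ _
            _ ≤ |k₁| * ‖x k σ - xbar σ‖ :=
              mul_le_mul_of_nonneg_right (le_abs_self k₁) (norm_nonneg _)
            _ ≤ |k₁| * (ε / C) := mul_le_mul_of_nonneg_left hd (abs_nonneg _)
        exact mul_le_mul (hu.trans (le_abs_self M)) e3 (norm_nonneg _) (abs_nonneg _)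
      calc ‖(f₀ (x k σ) - f₀ (xbar σ)) + u k σ • (f₁ (x k σ) - f₁ (xbar σ))‖
          ≤ ‖f₀ (x k σ) - f₀ (xbar σ)‖ + ‖u k σ • (f₁ (x k σ) - f₁ (xbar σ))‖ := norm_add_le _ _
        _ ≤ |k₀| * (ε / C) + |M| * (|k₁| * (ε / C)) := add_le_add e1 e2
        _ = A * (ε / C) := by rw [hA_def]; ring
    have hbd2 := norm_setIntegral_le_of_norm_le_const_ae hfinIoc hptbd
    rw [dist_eq_norm, sub_zero]
    have hAV : A * (volume (Set.Ioc t₀ t)).toReal ≤ C - 1 := le_of_eq (by rw [hC_def]; ring)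
    have hεCC : (ε / C) * C = ε := div_mul_cancel₀ ε hC.ne'
    calc ‖∫ σ in Set.Ioc t₀ t,
          ((f₀ (x k σ) - f₀ (xbar σ)) + u k σ • (f₁ (x k σ) - f₁ (xbar σ)))‖
        ≤ (A * (ε / C)) * (volume (Set.Ioc t₀ t)).toReal := hbd2
      _ = (ε / C) * (A * (volume (Set.Ioc t₀ t)).toReal) := by ring
      _ ≤ (ε / C) * (C - 1) := mul_le_mul_of_nonneg_left hAV hεC.le
      _ < ε := by nlinarith
  -- split the integral
  have hsplit : ∀ k, (∫ σ in Set.Ioc t₀ t, (f₀ (x k σ) + u k σ • f₁ (x k σ)))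
      = (((∫ σ in Set.Ioc t₀ t, f₀ (xbar σ)) + ∫ σ in Set.Ioc t₀ t, u k σ • f₁ (xbar σ))
        + ∫ σ in Set.Ioc t₀ t,
            ((f₀ (x k σ) - f₀ (xbar σ)) + u k σ • (f₁ (x k σ) - f₁ (xbar σ)))) := by
    intro k
    calc (∫ σ in Set.Ioc t₀ t, (f₀ (x k σ) + u k σ • f₁ (x k σ)))
        = ∫ σ in Set.Ioc t₀ t, ((f₀ (xbar σ) + u k σ • f₁ (xbar σ))
            + ((f₀ (x k σ) - f₀ (xbar σ)) + u k σ • (f₁ (x k σ) - f₁ (xbar σ)))) := by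
          refine integral_congr_ae (Eventually.of_forall fun σ => ?_)
          simp only [smul_sub]
          abel
      _ = (∫ σ in Set.Ioc t₀ t, (f₀ (xbar σ) + u k σ • f₁ (xbar σ)))
            + ∫ σ in Set.Ioc t₀ t,
              ((f₀ (x k σ) - f₀ (xbar σ)) + u k σ • (f₁ (x k σ) - f₁ (xbar σ))) :=
          integral_add (hf0xbar_int.add (hQint k)) (hDint k)
      _ = (((∫ σ in Set.Ioc t₀ t, f₀ (xbar σ)) + ∫ σ in Set.Ioc t₀ t, u k σ • f₁ (xbar σ))
            + ∫ σ in Set.Ioc t₀ t,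
              ((f₀ (x k σ) - f₀ (xbar σ)) + u k σ • (f₁ (x k σ) - f₁ (xbar σ)))) := by
          rw [integral_add hf0xbar_int (hQint k)]
  -- combine
  have hgoal : Tendsto (fun k => x₀ + ∫ σ in Set.Ioc t₀ t, (f₀ (x k σ) + u k σ • f₁ (x k σ)))
      atTop (nhds (x₀ + ∫ σ in Set.Ioc t₀ t, (f₀ (xbar σ) + ubar σ • f₁ (xbar σ)))) := by
    have h1 := (tendsto_const_nhds (x := ∫ σ in Set.Ioc t₀ t, f₀ (xbar σ))
      (f := atTop (α := ℕ))).add hQ |>.add hP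
    rw [add_zero] at h1
    have h2 : Tendsto (fun k => ∫ σ in Set.Ioc t₀ t, (f₀ (x k σ) + u k σ • f₁ (x k σ)))
        atTop (nhds ((∫ σ in Set.Ioc t₀ t, f₀ (xbar σ))
          + ∫ σ in Set.Ioc t₀ t, ubar σ • f₁ (xbar σ))) :=
      Tendsto.congr (fun k => (hsplit k).symm) h1
    rw [integral_add hf0xbar_int hQbarint]
    exact tendsto_const_nhds.add h2
  have hx_t : Tendsto (fun k => x k t) atTop (nhds (xbar t)) := hunif.tendsto_at ⟨ht₀t, htT⟩
  have heq' : ∀ k, x k t = x₀ + ∫ σ in Set.Ioc t₀ t, (f₀ (x k σ) + u k σ • f₁ (x k σ)) := by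
    intro k
    rw [heq k t ⟨ht₀t, htT⟩, intervalIntegral.integral_of_le ht₀t]
  have hfinal : xbar t = x₀ + ∫ σ in Set.Ioc t₀ t, (f₀ (xbar σ) + ubar σ • f₁ (xbar σ)) :=
    tendsto_nhds_unique (Tendsto.congr heq' hx_t) hgoal
  rw [intervalIntegral.integral_of_le ht₀t]
  exact hfinal
end
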